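/- Let A be a unital associative ℂ-algebra, with commutator [u,v] := uv − vu. Let L be a complex Lie algebra, σ : L → L a conjugate-linear involution with σ[a,b] = [σa, σb], and ⟨·,·⟩ : L × L → ℂ a sesquilinear form (conjugate-linear in the first argument, ℂ-linear in the second). Let Y_R, Y_L : L → L be ℂ-linear derivations of L. Suppose π : L → A and β* : L → A are ℂ-linear, β : L → A is conjugate-linear, and for all a, b, m, n ∈ L: [πa, πb] = π[a,b]; [πa, β*m] = β*([a,m]); [πa, βm] = β([σa, m]); [βm, β*n] = ⟨m,n⟩·1; [β*m, β*n] = 0; [βm, βn] = 0. Define L(a) := πa + β*(Y_R a) − β(Y_L(σa)). Then for all a, b ∈ L: [L(a), L(b)] = L([a,b]) + (⟨Y_L(σb), Y_R a⟩ − ⟨Y_L(σa), Y_R b⟩)·1. -/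

import Mathlib

/-- In a unital associative ℂ-algebra `A` (with commutator `⁅u,v⁆ = uv - vu`),
given a complex Lie algebra `L`, a conjugate-linear involution `σ` of `L` preserving
brackets, a sesquilinear form `S` on `L`, two ℂ-linear derivations `Y_R, Y_L` of `L`,
and maps `π, β*, β` into `A` satisfying the stated commutation relations, the operators
`L(a) = π a + β*(Y_R a) − β(Y_L(σ a))` satisfy
`[L(a), L(b)] = L([a,b]) + (S(Y_L(σ b), Y_R a) − S(Y_L(σ a), Y_R b))·1`. -/
theorem fock_operators_central_extension
    (A : Type*) [Ring A] [Algebra ℂ A]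
    (L : Type*) [LieRing L] [LieAlgebra ℂ L]
    (σ : L →ₛₗ[starRingEnd ℂ] L)
    (hσinv : ∀ a : L, σ (σ a) = a)
    (hσlie : ∀ a b : L, σ ⁅a, b⁆ = ⁅σ a, σ b⁆)
    (S : L →ₛₗ[starRingEnd ℂ] L →ₗ[ℂ] ℂ)
    (Y_R Y_L : L →ₗ[ℂ] L)
    (hYR : ∀ x y : L, Y_R ⁅x, y⁆ = ⁅Y_R x, y⁆ + ⁅x, Y_R y⁆)
    (hYL : ∀ x y : L, Y_L ⁅x, y⁆ = ⁅Y_L x, y⁆ + ⁅x, Y_L y⁆)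
    (π : L →ₗ[ℂ] A) (βc : L →ₗ[ℂ] A) (βa : L →ₛₗ[starRingEnd ℂ] A)
    (hππ : ∀ a b : L, ⁅π a, π b⁆ = π ⁅a, b⁆)
    (hπβc : ∀ a m : L, ⁅π a, βc m⁆ = βc ⁅a, m⁆)
    (hπβa : ∀ a m : L, ⁅π a, βa m⁆ = βa ⁅σ a, m⁆)
    (hccr : ∀ m n : L, ⁅βa m, βc n⁆ = (S m n) • (1 : A))
    (hβcβc : ∀ m n : L, ⁅βc m, βc n⁆ = 0)
    (hβaβa : ∀ m n : L, ⁅βa m, βa n⁆ = 0)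
    (Lop : L → A)
    (hLop : ∀ a : L, Lop a = π a + βc (Y_R a) - βa (Y_L (σ a))) :
    ∀ a b : L,
      ⁅Lop a, Lop b⁆ =
        Lop ⁅a, b⁆ + (S (Y_L (σ b)) (Y_R a) - S (Y_L (σ a)) (Y_R b)) • (1 : A) := by
  intro a b
  letI : LieRing A := LieRing.ofAssociativeRing
  have hcβπ : ∀ m c : L, ⁅βc m, π c⁆ = βc ⁅m, c⁆ := by
    intro m c
    rw [← lie_skew, hπβc, ← map_neg, lie_skew]
  have hcβaπ : ∀ m c : L, ⁅βa m, π c⁆ = βa ⁅m, σ c⁆ := by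
    intro m c
    rw [← lie_skew, hπβa, ← map_neg, lie_skew]
  have hcca : ∀ m n : L, ⁅βc m, βa n⁆ = -(S n m • (1 : A)) := by
    intro m n
    rw [← lie_skew, hccr]
  rw [hLop a, hLop b, hLop ⁅a, b⁆]
  simp only [lie_add, lie_sub, add_lie, sub_lie, hππ, hπβc, hπβa, hcβπ, hcβaπ,
    hccr, hβcβc, hβaβa, hcca, hYR, hσlie, hYL, map_add, sub_smul]
  abel
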